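/- Let T be the caterpillar tree metric on 5 taxa with two internal edges of weights g > 0 and h > 0, leaves 1,2 attached at one end, leaf 5 attached to the middle node, and leaves 3,4 attached at the other end: with pendant weights e₁,…,e₅ > 0, set T(1,2)=e₁+e₂, T(3,4)=e₃+e₄, T(1,5)=e₁+g+e₅, T(2,5)=e₂+g+e₅, T(3,5)=e₃+h+e₅, T(4,5)=e₄+h+e₅, and T(i,j)=e_i+g+h+e_j for i∈{1,2}, j∈{3,4}. Then T is NOT the tropical mixture of two star tree metrics on 5 taxa; that is, there exist no star tree metrics D, D̄ with T = D⊕D̄. -/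
import Mathlib


/-- A star tree metric on `n` taxa: a dissimilarity map of the form
`D(i,j) = e i + e j` for `i ≠ j` (and `D(i,i) = 0`) with all pendant weights positive. -/
def IsStarTreeMetric {n : ℕ} (D : Fin n → Fin n → ℝ) : Prop :=
  ∃ e : Fin n → ℝ, (∀ i, 0 < e i) ∧ (∀ i, D i i = 0) ∧
    ∀ i j, i ≠ j → D i j = e i + e j

/-- `T` is the tropical mixture (pointwise maximum) of two star tree metrics. -/
def IsMixtureOfTwoStars {n : ℕ} (T : Fin n → Fin n → ℝ) : Prop :=
  ∃ D Dbar : Fin n → Fin n → ℝ, IsStarTreeMetric D ∧ IsStarTreeMetric Dbar ∧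
    ∀ i j, T i j = max (D i j) (Dbar i j)

set_option maxHeartbeats 4000000 in
/-- the caterpillar tree metric on 5 taxa with two internal edges of
weights `g, h > 0` (leaves 1,2 at one end, leaves 3,4 at the other end, leaf 5 at
the middle node; here taxa `1,…,5` are indices `0,…,4`) is NOT the tropical
mixture of two star tree metrics. -/
theorem caterpillar_not_mixture (e : Fin 5 → ℝ) (he : ∀ i, 0 < e i)
    (g h : ℝ) (hg : 0 < g) (hh : 0 < h)
    (T : Fin 5 → Fin 5 → ℝ)
    (hsymm : ∀ i j, T i j = T j i) (hdiag : ∀ i, T i i = 0)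
    (h01 : T 0 1 = e 0 + e 1) (h23 : T 2 3 = e 2 + e 3)
    (h04 : T 0 4 = e 0 + g + e 4) (h14 : T 1 4 = e 1 + g + e 4)
    (h24 : T 2 4 = e 2 + h + e 4) (h34 : T 3 4 = e 3 + h + e 4)
    (h02 : T 0 2 = e 0 + g + h + e 2) (h03 : T 0 3 = e 0 + g + h + e 3)
    (h12 : T 1 2 = e 1 + g + h + e 2) (h13 : T 1 3 = e 1 + g + h + e 3) :
    ¬ IsMixtureOfTwoStars T := by
  rintro ⟨D, Db, ⟨a, ha, -, hDa⟩, ⟨b, hb, -, hDb⟩, hmix⟩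
  have key : ∀ i j : Fin 5, i ≠ j →
      a i + a j ≤ T i j ∧ b i + b j ≤ T i j ∧
      (a i + a j = T i j ∨ b i + b j = T i j) := by
    intro i j hij
    have hm := hmix i j
    rw [hDa i j hij, hDb i j hij] at hm
    refine ⟨hm ▸ le_max_left _ _, hm ▸ le_max_right _ _, ?_⟩
    rcases max_choice (a i + a j) (b i + b j) with hc | hc
    · exact Or.inl (by rw [hm, hc])
    · exact Or.inr (by rw [hm, hc])
  obtain ⟨A01, B01, -⟩ := key 0 1 (by decide)
  obtain ⟨A23, B23, -⟩ := key 2 3 (by decide)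
  obtain ⟨A14, B14, -⟩ := key 1 4 (by decide)
  obtain ⟨A34, B34, C34⟩ := key 3 4 (by decide)
  obtain ⟨A24, B24, C24⟩ := key 2 4 (by decide)
  obtain ⟨A04, B04, C04⟩ := key 0 4 (by decide)
  obtain ⟨A02, B02, C02⟩ := key 0 2 (by decide)
  obtain ⟨A03, B03, C03⟩ := key 0 3 (by decide)
  obtain ⟨A12, B12, C12⟩ := key 1 2 (by decide)
  obtain ⟨A13, B13, C13⟩ := key 1 3 (by decide)
  rw [h01] at A01 B01
  rw [h23] at A23 B23
  rw [h14] at A14 B14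
  rw [h34] at A34 B34 C34
  rw [h24] at A24 B24 C24
  rw [h04] at A04 B04 C04
  rw [h02] at A02 B02 C02
  rw [h03] at A03 B03 C03
  rw [h12] at A12 B12 C12
  rw [h13] at A13 B13 C13
  rcases C34 with H34 | H34 <;> rcases C24 with H24 | H24 <;>
    rcases C04 with H04 | H04 <;> rcases C02 with H02 | H02 <;>
    rcases C03 with H03 | H03 <;> rcases C12 with H12 | H12 <;>
    rcases C13 with H13 | H13 <;> linarith
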